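/- Strong finitary model property of LP_CS: for every constant specification CS for LP there exist computable functions f, g, h : ℕ → ℕ such that for every formula A not derivable in the Hilbert system LP_CS there is a finitary Fitting model M = (W,R,E,ν) for LP_CS, with E the minimal admissible evidence relation containing a finite base B, and a world w ∈ W with M,w ⊮ A, |W| ≤ f(|A|), |B| ≤ g(|A|), and |{(w,p) : w ∈ ν(p)}| ≤ h(|A|), where |A| denotes the number of symbols of A and |·| denotes cardinality. -/

import Mathlib

namespace JustificationLogic

/-- Justification terms: constants, variables, application, sum, and proof checker `!`. -/
inductive Term : Type
  | const : ℕ → Term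
  | var : ℕ → Term
  | app : Term → Term → Term
  | sum : Term → Term → Term
  | bang : Term → Term
  deriving DecidableEq

/-- Formulas of justification logic: atoms, negation, implication, and `t : A`. -/
inductive Formula : Type
  | atom : ℕ → Formula
  | neg : Formula → Formula
  | impl : Formula → Formula → Formula
  | just : Term → Formula → Formula
  deriving DecidableEq

/-- Disjunction, defined classically: `A ∨ B := ¬A → B`. -/
def Formula.or (A B : Formula) : Formula := (Formula.neg A).impl B

/-- Falsum, defined as the negation of a propositional tautology. -/
def Formula.falsum : Formula := Formula.neg ((Formula.atom 0).impl (Formula.atom 0))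

/-- Number of symbols of a term. -/
def Term.size : Term → ℕ
  | .const _ => 1
  | .var _ => 1
  | .app s t => s.size + t.size + 1
  | .sum s t => s.size + t.size + 1
  | .bang t => t.size + 1

/-- Number of symbols of a formula. -/
def Formula.size : Formula → ℕ
  | .atom _ => 1
  | .neg A => A.size + 1
  | .impl A B => A.size + B.size + 1
  | .just t A => t.size + A.size + 1

/-- An explicit numerical code for terms (an injective Gödel numbering). -/
def Term.code : Term → ℕ
  | .const n => Nat.pair 0 n
  | .var n => Nat.pair 1 n
  | .app s t => Nat.pair 2 (Nat.pair s.code t.code)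
  | .sum s t => Nat.pair 3 (Nat.pair s.code t.code)
  | .bang t => Nat.pair 4 t.code

/-- An explicit numerical code for formulas (an injective Gödel numbering). -/
def Formula.code : Formula → ℕ
  | .atom n => Nat.pair 0 n
  | .neg A => Nat.pair 1 A.code
  | .impl A B => Nat.pair 2 (Nat.pair A.code B.code)
  | .just t A => Nat.pair 3 (Nat.pair t.code A.code)

/-- Substitution of terms for term variables. -/
def Term.subst (σ : ℕ → Term) : Term → Term
  | .const n => .const n
  | .var n => σ n
  | .app s t => .app (s.subst σ) (t.subst σ)
  | .sum s t => .sum (s.subst σ) (t.subst σ)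
  | .bang t => .bang (t.subst σ)

/-- Simultaneous substitution of terms for term variables and formulas for atoms. -/
def Formula.subst (σ : ℕ → Term) (τ : ℕ → Formula) : Formula → Formula
  | .atom n => τ n
  | .neg A => .neg (A.subst σ τ)
  | .impl A B => .impl (A.subst σ τ) (B.subst σ τ)
  | .just t A => .just (t.subst σ) (A.subst σ τ)

/-- `towerT c n = !ⁿc`. -/
def towerT (c : Term) : ℕ → Term
  | 0 => c
  | n + 1 => Term.bang (towerT c n)

/-- `towerF c A n = !ⁿ⁻¹c : ⋯ : !c : c : A` (and `A` for `n = 0`), so that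
`(towerT c n) : (towerF c A n)` is the `n`-th formula produced by the rule (AN!). -/
def towerF (c : Term) (A : Formula) : ℕ → Formula
  | 0 => A
  | n + 1 => Formula.just (towerT c n) (towerF c A n)

/-- The axioms of the justification logics considered, with switches `hd`, `ht`, `h4`
for the axioms (jd), (jt), (j4).  The propositional part (A1) is given by three
standard Hilbert-style schemes axiomatizing classical propositional logic. -/
inductive Ax (hd ht h4 : Bool) : Formula → Prop
  | k (A B : Formula) : Ax hd ht h4 (A.impl (B.impl A))
  | s (A B C : Formula) :
      Ax hd ht h4 ((A.impl (B.impl C)).impl ((A.impl B).impl (A.impl C)))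
  | dn (A B : Formula) :
      Ax hd ht h4 (((A.neg).impl (B.neg)).impl (B.impl A))
  | a2 (t s : Term) (A B : Formula) :
      Ax hd ht h4 ((Formula.just t (A.impl B)).impl
        ((Formula.just s A).impl (Formula.just (Term.app t s) B)))
  | a3 (t s : Term) (A : Formula) :
      Ax hd ht h4 (((Formula.just t A).or (Formula.just s A)).impl
        (Formula.just (Term.sum t s) A))
  | jd (t : Term) : hd = true →
      Ax hd ht h4 ((Formula.just t Formula.falsum).impl Formula.falsum)
  | jt (t : Term) (A : Formula) : ht = true →
      Ax hd ht h4 ((Formula.just t A).impl A)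
  | j4 (t : Term) (A : Formula) : h4 = true →
      Ax hd ht h4 ((Formula.just t A).impl
        (Formula.just (Term.bang t) (Formula.just t A)))

/-- Axioms of the respective logics. -/
def AxJ : Formula → Prop := Ax false false false
def AxJT : Formula → Prop := Ax false true false
def AxJD : Formula → Prop := Ax true false false
def AxJ4 : Formula → Prop := Ax false false true
def AxJD4 : Formula → Prop := Ax true false true
def AxLP : Formula → Prop := Ax false true true

/-- `CS` is a constant specification for the logic with axioms `Axm`:
every member of `CS` is of the form `c : A` with `c` a constant and `A` an axiom. -/
def ConstSpec (Axm : Formula → Prop) (CS : Set Formula) : Prop :=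
  ∀ F ∈ CS, ∃ (c : ℕ) (A : Formula), F = Formula.just (Term.const c) A ∧ Axm A

/-- `CS` is axiomatically appropriate for axioms `Axm`:
for every axiom `A` there is a constant `c` with `c : A ∈ CS`. -/
def AxApprop (Axm : Formula → Prop) (CS : Set Formula) : Prop :=
  ∀ A : Formula, Axm A → ∃ c : ℕ, Formula.just (Term.const c) A ∈ CS

/-- `CS` is schematic: the set of axioms justified by a given constant consists of
axiom schemes, i.e. it is closed under simultaneous substitution of terms for term
variables and formulas for atomic propositions. -/
def Schematic (CS : Set Formula) : Prop :=
  ∀ (c : ℕ) (A : Formula), Formula.just (Term.const c) A ∈ CS →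
    ∀ (σ : ℕ → Term) (τ : ℕ → Formula),
      Formula.just (Term.const c) (A.subst σ τ) ∈ CS

/-- `CS` is decidable: some computable function decides membership in `CS`
(via the explicit Gödel numbering of formulas). -/
def DecidableCS (CS : Set Formula) : Prop :=
  ∃ C : ℕ → Bool, Computable C ∧ ∀ F : Formula, F ∈ CS ↔ C F.code = true

/-- Hilbert-style derivability with the iterated axiom necessitation rule (AN!):
from `c : A ∈ CS` infer `!ⁿc : !ⁿ⁻¹c : ⋯ : !c : c : A` for every `n ≥ 0`. -/
inductive DerivB (Axm : Formula → Prop) (CS : Set Formula) : Formula → Prop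
  | ax {A : Formula} : Axm A → DerivB Axm CS A
  | mp {A B : Formula} : DerivB Axm CS (A.impl B) → DerivB Axm CS A → DerivB Axm CS B
  | an (c : ℕ) (A : Formula) (n : ℕ) :
      Formula.just (Term.const c) A ∈ CS →
      DerivB Axm CS (Formula.just (towerT (Term.const c) n) (towerF (Term.const c) A n))

/-- Hilbert-style derivability with the simple axiom necessitation rule (AN):
from `c : A ∈ CS` infer `c : A`. -/
inductive DerivS (Axm : Formula → Prop) (CS : Set Formula) : Formula → Prop
  | ax {A : Formula} : Axm A → DerivS Axm CS A
  | mp {A B : Formula} : DerivS Axm CS (A.impl B) → DerivS Axm CS A → DerivS Axm CS B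
  | an (c : ℕ) (A : Formula) :
      Formula.just (Term.const c) A ∈ CS →
      DerivS Axm CS (Formula.just (Term.const c) A)

/-- A structure for Fitting models: a nonempty set of worlds, an accessibility
relation, an evidence relation and a valuation. -/
structure Model : Type 1 where
  World : Type
  nonempty : Nonempty World
  R : World → World → Prop
  E : Term → Formula → World → Prop
  val : ℕ → World → Prop

/-- The satisfaction relation `M, w ⊩ A`. -/
def Sat (M : Model) : Formula → M.World → Prop
  | .atom n, w => M.val n w
  | .neg A, w => ¬ Sat M A w
  | .impl A B, w => Sat M A w → Sat M B w
  | .just t A, w => M.E t A w ∧ ∀ v : M.World, M.R w v → Sat M A v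

/-- The evidence relation of a model, as a set of triples. -/
def EvSet (M : Model) : Set (Term × Formula × M.World) :=
  {x | M.E x.1 x.2.1 x.2.2}

/-- The graph of the valuation: the set `{(w, p) | w ∈ ν(p)}`. -/
def ValSet (M : Model) : Set (M.World × ℕ) :=
  {p | M.val p.2 p.1}

/-- Seriality of a relation: every world has a successor. -/
def Serial {W : Type} (R : W → W → Prop) : Prop := ∀ w : W, ∃ v : W, R w v

/-- Admissible evidence relation for the logics without the (j4) axiom:
closure under sum and application, and the constant specification condition
with iterated `!`. -/
def AdmissibleBang (CS : Set Formula) {W : Type}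
    (E : Set (Term × Formula × W)) : Prop :=
  (∀ (s t : Term) (A : Formula) (w : W),
      ((s, A, w) ∈ E ∨ (t, A, w) ∈ E) → (Term.sum s t, A, w) ∈ E) ∧
  (∀ (s t : Term) (A B : Formula) (w : W),
      (s, A.impl B, w) ∈ E → (t, A, w) ∈ E → (Term.app s t, B, w) ∈ E) ∧
  (∀ (c : ℕ) (A : Formula) (w : W) (n : ℕ),
      Formula.just (Term.const c) A ∈ CS →
      (towerT (Term.const c) n, towerF (Term.const c) A n, w) ∈ E)

/-- Admissible evidence relation for the logics with the (j4) axiom: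
closure under sum and application, the simple constant specification condition,
closure under `!`, and monotonicity along the accessibility relation. -/
def AdmissibleJ4 (CS : Set Formula) {W : Type} (R : W → W → Prop)
    (E : Set (Term × Formula × W)) : Prop :=
  (∀ (s t : Term) (A : Formula) (w : W),
      ((s, A, w) ∈ E ∨ (t, A, w) ∈ E) → (Term.sum s t, A, w) ∈ E) ∧
  (∀ (s t : Term) (A B : Formula) (w : W),
      (s, A.impl B, w) ∈ E → (t, A, w) ∈ E → (Term.app s t, B, w) ∈ E) ∧
  (∀ (c : ℕ) (A : Formula) (w : W),
      Formula.just (Term.const c) A ∈ CS → (Term.const c, A, w) ∈ E) ∧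
  (∀ (t : Term) (A : Formula) (w : W),
      (t, A, w) ∈ E → (Term.bang t, Formula.just t A, w) ∈ E) ∧
  (∀ (t : Term) (A : Formula) (w v : W),
      (t, A, w) ∈ E → R w v → (t, A, v) ∈ E)

/-- `M` is a Fitting model for `J_CS`. -/
def IsModelJ (CS : Set Formula) (M : Model) : Prop :=
  AdmissibleBang CS (EvSet M)

/-- `M` is a Fitting model for `JT_CS`: additionally `R` is reflexive. -/
def IsModelJT (CS : Set Formula) (M : Model) : Prop :=
  Reflexive M.R ∧ AdmissibleBang CS (EvSet M)

/-- `M` is a Fitting model for `JD_CS`: additionally `R` is serial. -/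
def IsModelJD (CS : Set Formula) (M : Model) : Prop :=
  Serial M.R ∧ AdmissibleBang CS (EvSet M)

/-- `M` is a Fitting model for `J4_CS`: `R` is transitive. -/
def IsModelJ4 (CS : Set Formula) (M : Model) : Prop :=
  Transitive M.R ∧ AdmissibleJ4 CS M.R (EvSet M)

/-- `M` is a Fitting model for `JD4_CS`: `R` is serial and transitive. -/
def IsModelJD4 (CS : Set Formula) (M : Model) : Prop :=
  Serial M.R ∧ Transitive M.R ∧ AdmissibleJ4 CS M.R (EvSet M)

/-- `M` is a Fitting model for `LP_CS`: `R` is reflexive and transitive. -/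
def IsModelLP (CS : Set Formula) (M : Model) : Prop :=
  Reflexive M.R ∧ Transitive M.R ∧ AdmissibleJ4 CS M.R (EvSet M)

/-- `B` is a base for the evidence relation of `M`, and that evidence relation is
minimal (least) among the admissible ones (non-(j4) version) containing `B`. -/
def MinBaseBang (CS : Set Formula) (M : Model)
    (B : Set (Term × Formula × M.World)) : Prop :=
  B ⊆ EvSet M ∧
  ∀ E' : Set (Term × Formula × M.World),
    AdmissibleBang CS E' → B ⊆ E' → EvSet M ⊆ E'

/-- `B` is a base for the evidence relation of `M`, and that evidence relation is
minimal (least) among the admissible ones ((j4) version) containing `B`. -/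
def MinBaseJ4 (CS : Set Formula) (M : Model)
    (B : Set (Term × Formula × M.World)) : Prop :=
  B ⊆ EvSet M ∧
  ∀ E' : Set (Term × Formula × M.World),
    AdmissibleJ4 CS M.R E' → B ⊆ E' → EvSet M ⊆ E'

/-- `M` is finitary (non-(j4) version): finitely many worlds, the evidence relation
is the minimal admissible one over some finite base, and the valuation has finite graph. -/
def FinitaryBang (CS : Set Formula) (M : Model) : Prop :=
  Finite M.World ∧
  (∃ B : Set (Term × Formula × M.World), B.Finite ∧ MinBaseBang CS M B) ∧
  (ValSet M).Finite

/-- `M` is finitary ((j4) version): finitely many worlds, the evidence relation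
is the minimal admissible one over some finite base, and the valuation has finite graph. -/
def FinitaryJ4 (CS : Set Formula) (M : Model) : Prop :=
  Finite M.World ∧
  (∃ B : Set (Term × Formula × M.World), B.Finite ∧ MinBaseJ4 CS M B) ∧
  (ValSet M).Finite

/-! ### Auxiliary development for the strong finitary model property -/

section Aux

open Formula

/-- Derivability from a set of hypotheses, for `LP` with constant specification `CS`. -/
inductive Deriv (CS : Set Formula) (Γ : Set Formula) : Formula → Prop
  | hyp {A : Formula} : A ∈ Γ → Deriv CS Γ A
  | ax {A : Formula} : AxLP A → Deriv CS Γ A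
  | mp {A B : Formula} : Deriv CS Γ (A.impl B) → Deriv CS Γ A → Deriv CS Γ B
  | an {c : ℕ} {A : Formula} : Formula.just (Term.const c) A ∈ CS →
      Deriv CS Γ (Formula.just (Term.const c) A)

variable {CS Γ Δ : Set Formula}

theorem Deriv.weaken {B : Formula} (h : Deriv CS Γ B) (hs : Γ ⊆ Δ) : Deriv CS Δ B := by
  induction h with
  | hyp h => exact .hyp (hs h)
  | ax h => exact .ax h
  | mp _ _ ih1 ih2 => exact .mp ih1 ih2
  | an h => exact .an h

theorem deriv_empty_derivS {A : Formula} (h : Deriv CS ∅ A) : DerivS AxLP CS A := by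
  induction h with
  | hyp h => exact absurd h (Set.notMem_empty _)
  | ax h => exact .ax h
  | mp _ _ ih1 ih2 => exact .mp ih1 ih2
  | an h => exact .an _ _ h

theorem derivS_deriv {A : Formula} (h : DerivS AxLP CS A) : Deriv CS Γ A := by
  induction h with
  | ax h => exact .ax h
  | mp _ _ ih1 ih2 => exact .mp ih1 ih2
  | an c A h => exact .an h

theorem deriv_id (A : Formula) : Deriv CS Γ (A.impl A) :=
  .mp (.mp (.ax (Ax.s A (A.impl A) A)) (.ax (Ax.k A (A.impl A)))) (.ax (Ax.k A A))

theorem deduction {A B : Formula} (h : Deriv CS (insert A Γ) B) :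
    Deriv CS Γ (A.impl B) := by
  induction h with
  | hyp h =>
    rcases h with h | h
    · subst h; exact deriv_id _
    · exact .mp (.ax (Ax.k _ A)) (.hyp h)
  | ax h => exact .mp (.ax (Ax.k _ A)) (.ax h)
  | an h => exact .mp (.ax (Ax.k _ A)) (.an h)
  | mp _ _ ih1 ih2 => exact .mp (.mp (.ax (Ax.s A _ _)) ih1) ih2

theorem Deriv.comp {A B C : Formula} (h1 : Deriv CS Γ (A.impl B))
    (h2 : Deriv CS Γ (B.impl C)) : Deriv CS Γ (A.impl C) :=
  deduction <| .mp (h2.weaken (Set.subset_insert _ _))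
    (.mp (h1.weaken (Set.subset_insert _ _)) (.hyp (Set.mem_insert _ _)))

/-- Explosion: `¬C → (C → B)`. -/
theorem deriv_explosion (C B : Formula) : Deriv CS Γ ((C.neg).impl (C.impl B)) :=
  .comp (.ax (Ax.k C.neg B.neg)) (.ax (Ax.dn B C))

/-- `(¬A → A) → A`. -/
theorem deriv_taut1 (A : Formula) : Deriv CS Γ (((A.neg).impl A).impl A) := by
  apply deduction
  set X := (A.neg).impl A with hX
  have hmem : X ∈ insert X Γ := Set.mem_insert _ _
  have h1 : Deriv CS (insert A.neg (insert X Γ)) X.neg := by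
    have hA : Deriv CS (insert A.neg (insert X Γ)) A :=
      .mp (.hyp (Set.mem_insert_of_mem _ hmem)) (.hyp (Set.mem_insert _ _))
    exact .mp (.mp (deriv_explosion A X.neg) (.hyp (Set.mem_insert _ _))) hA
  have h2 : Deriv CS (insert X Γ) ((A.neg).impl X.neg) := deduction h1
  exact .mp (.mp (.ax (Ax.dn A X)) h2) (.hyp hmem)

/-- Double negation elimination: `¬¬A → A`. -/
theorem deriv_dne (A : Formula) : Deriv CS Γ ((A.neg.neg).impl A) := by
  apply deduction
  have h1 : Deriv CS (insert A.neg.neg Γ) ((A.neg).impl A.neg.neg) :=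
    .mp (.ax (Ax.k A.neg.neg A.neg)) (.hyp (Set.mem_insert _ _))
  have h2 : Deriv CS (insert A.neg.neg Γ) ((A.neg).impl A) :=
    .mp (.ax (Ax.dn A A.neg)) h1
  exact .mp (deriv_taut1 A) h2

/-- If `A → ⊥` is derivable, so is `¬A`. -/
theorem deriv_negI {A : Formula} (h : Deriv CS Γ (A.impl Formula.falsum)) :
    Deriv CS Γ A.neg := by
  have h1 : Deriv CS Γ ((A.neg.neg).impl (((Formula.atom 0).impl (Formula.atom 0)).neg)) :=
    (deriv_dne A).comp h
  have h2 : Deriv CS Γ (((Formula.atom 0).impl (Formula.atom 0)).impl A.neg) :=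
    .mp (.ax (Ax.dn A.neg ((Formula.atom 0).impl (Formula.atom 0)))) h1
  exact .mp h2 (deriv_id _)

theorem deriv_falsum_of_pair {C : Formula} (h1 : Deriv CS Γ C) (h2 : Deriv CS Γ C.neg) :
    Deriv CS Γ Formula.falsum :=
  .mp (.mp (deriv_explosion C Formula.falsum) h2) h1

/-- Consistency. -/
def Con (CS Γ : Set Formula) : Prop := ¬ Deriv CS Γ Formula.falsum

theorem chain_deriv {c : Set (Set Formula)} (hc : IsChain (· ⊆ ·) c) (hne : c.Nonempty)
    {B : Formula} (h : Deriv CS (⋃₀ c) B) : ∃ Δ ∈ c, Deriv CS Δ B := by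
  induction h with
  | hyp h => rcases h with ⟨Δ, hΔ, hB⟩; exact ⟨Δ, hΔ, .hyp hB⟩
  | ax h => exact ⟨hne.choose, hne.choose_spec, .ax h⟩
  | an h => exact ⟨hne.choose, hne.choose_spec, .an h⟩
  | mp _ _ ih1 ih2 =>
    obtain ⟨Δ1, h1, hd1⟩ := ih1
    obtain ⟨Δ2, h2, hd2⟩ := ih2
    rcases hc.total h1 h2 with hle | hle
    · exact ⟨Δ2, h2, .mp (hd1.weaken hle) hd2⟩
    · exact ⟨Δ1, h1, .mp hd1 (hd2.weaken hle)⟩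

/-- Lindenbaum lemma. -/
theorem lindenbaum (hΓ : Con CS Γ) :
    ∃ m, Γ ⊆ m ∧ Con CS m ∧ ∀ Δ, Con CS Δ → m ⊆ Δ → Δ ⊆ m := by
  obtain ⟨m, hsub, hmax⟩ := zorn_subset_nonempty {Δ | Con CS Δ}
    (fun c hcS hc hne => ⟨⋃₀ c, fun hd => by
      obtain ⟨Δ, hΔ, hd⟩ := chain_deriv hc hne hd
      exact hcS hΔ hd, fun s hs => Set.subset_sUnion_of_mem hs⟩) Γ hΓ
  exact ⟨m, hsub, hmax.1, fun Δ hΔ hle => hmax.2 hΔ hle⟩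

section MCS
variable {m : Set Formula} (hcon : Con CS m)
  (hmax : ∀ Δ, Con CS Δ → m ⊆ Δ → Δ ⊆ m)

include hcon hmax in
theorem mcs_closed {B : Formula} (h : Deriv CS m B) : B ∈ m := by
  have hcon' : Con CS (insert B m) := fun hf =>
    hcon (.mp (deduction hf) h)
  exact hmax _ hcon' (Set.subset_insert _ _) (Set.mem_insert _ _)

include hcon hmax in
theorem mcs_neg_complete {B : Formula} (h : B ∉ m) : B.neg ∈ m := by
  by_cases hcon' : Con CS (insert B m)
  · exact absurd (hmax _ hcon' (Set.subset_insert _ _) (Set.mem_insert _ _)) h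
  · have hf : Deriv CS (insert B m) Formula.falsum := not_not.mp hcon'
    exact mcs_closed hcon hmax (deriv_negI (deduction hf))

include hcon in
theorem mcs_not_both {B : Formula} (h1 : B ∈ m) (h2 : B.neg ∈ m) : False :=
  hcon (deriv_falsum_of_pair (.hyp h1) (.hyp h2))

include hcon hmax in
theorem mcs_impl {C D : Formula} : C.impl D ∈ m ↔ (C ∈ m → D ∈ m) := by
  constructor
  · intro h hC
    exact mcs_closed hcon hmax (.mp (.hyp h) (.hyp hC))
  · intro h
    by_cases hC : C ∈ m
    · exact mcs_closed hcon hmax (.mp (.ax (Ax.k D C)) (.hyp (h hC)))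
    · exact mcs_closed hcon hmax
        (.mp (deriv_explosion C D) (.hyp (mcs_neg_complete hcon hmax hC)))

include hcon hmax in
theorem mcs_neg {C : Formula} : C.neg ∈ m ↔ C ∉ m :=
  ⟨fun h hC => mcs_not_both hcon hC h, mcs_neg_complete hcon hmax⟩

end MCS

/-- Subformulas of a formula, as a finite set. -/
def Formula.subf : Formula → Finset Formula
  | .atom n => {Formula.atom n}
  | .neg A => insert (Formula.neg A) A.subf
  | .impl A B => insert (Formula.impl A B) (A.subf ∪ B.subf)
  | .just t A => insert (Formula.just t A) A.subf

theorem Formula.mem_subf_self (A : Formula) : A ∈ A.subf := by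
  cases A <;> simp [Formula.subf]

theorem Formula.subf_trans {A B : Formula} (h : B ∈ A.subf) : B.subf ⊆ A.subf := by
  induction A with
  | atom n =>
    simp only [Formula.subf, Finset.mem_singleton] at h
    subst h; exact Finset.Subset.refl _
  | neg A ih =>
    simp only [Formula.subf, Finset.mem_insert] at h
    rcases h with h | h
    · subst h; exact Finset.Subset.refl _
    · exact (ih h).trans (Finset.subset_insert _ _)
  | impl A B ihA ihB =>
    simp only [Formula.subf, Finset.mem_insert, Finset.mem_union] at h
    rcases h with h | h | h
    · subst h; exact Finset.Subset.refl _
    · exact (ihA h).trans ((Finset.subset_union_left).trans (Finset.subset_insert _ _))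
    · exact (ihB h).trans ((Finset.subset_union_right).trans (Finset.subset_insert _ _))
  | just t A ih =>
    simp only [Formula.subf, Finset.mem_insert] at h
    rcases h with h | h
    · subst h; exact Finset.Subset.refl _
    · exact (ih h).trans (Finset.subset_insert _ _)

theorem Formula.subf_card (A : Formula) : A.subf.card ≤ A.size := by
  induction A with
  | atom n => simp [Formula.subf, Formula.size]
  | neg A ih =>
    calc (Formula.neg A).subf.card ≤ A.subf.card + 1 := Finset.card_insert_le _ _
      _ ≤ A.size + 1 := by omega
  | impl A B ihA ihB =>
    calc (Formula.impl A B).subf.card ≤ (A.subf ∪ B.subf).card + 1 :=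
          Finset.card_insert_le _ _
      _ ≤ A.subf.card + B.subf.card + 1 := by
          have := Finset.card_union_le A.subf B.subf; omega
      _ ≤ A.size + B.size + 1 := by omega
  | just t A ih =>
    calc (Formula.just t A).subf.card ≤ A.subf.card + 1 := Finset.card_insert_le _ _
      _ ≤ A.size + 1 := by omega
      _ ≤ t.size + A.size + 1 := by omega

/-- The minimal closure of a base `B` of term–formula pairs (single-world version). -/
inductive EvCl (CS : Set Formula) (B : Set (Term × Formula)) : Term → Formula → Prop
  | base {t A} : (t, A) ∈ B → EvCl CS B t A
  | suml {s t A} : EvCl CS B s A → EvCl CS B (Term.sum s t) A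
  | sumr {s t A} : EvCl CS B t A → EvCl CS B (Term.sum s t) A
  | app {s t A B'} : EvCl CS B s (A.impl B') → EvCl CS B t A →
      EvCl CS B (Term.app s t) B'
  | cs {c A} : Formula.just (Term.const c) A ∈ CS → EvCl CS B (Term.const c) A
  | bang {t A} : EvCl CS B t A → EvCl CS B (Term.bang t) (Formula.just t A)

theorem deriv_orl {X Y : Formula} (h : Deriv CS Γ X) : Deriv CS Γ ((X.neg).impl Y) :=
  deduction (.mp (.mp (deriv_explosion X Y) (.hyp (Set.mem_insert _ _)))
    (h.weaken (Set.subset_insert _ _)))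

theorem deriv_orr {X Y : Formula} (h : Deriv CS Γ Y) : Deriv CS Γ ((X.neg).impl Y) :=
  .mp (.ax (Ax.k Y X.neg)) h

/-- Everything in the closure of the base is justified in `m`. -/
theorem evcl_deriv {m : Set Formula} {B : Set (Term × Formula)}
    (hB : ∀ t C, (t, C) ∈ B → Formula.just t C ∈ m)
    {t : Term} {C : Formula} (h : EvCl CS B t C) : Deriv CS m (Formula.just t C) := by
  induction h with
  | base h => exact .hyp (hB _ _ h)
  | suml h ih => exact .mp (.ax (Ax.a3 _ _ _)) (deriv_orl ih)
  | sumr h ih => exact .mp (.ax (Ax.a3 _ _ _)) (deriv_orr ih)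
  | app h1 h2 ih1 ih2 => exact .mp (.mp (.ax (Ax.a2 _ _ _ _)) ih1) ih2
  | cs h => exact .an h
  | bang h ih => exact .mp (.ax (Ax.j4 _ _ rfl)) ih

end Aux

/-- Helper: map a formula `t:C` to the evidence triple `(t, C, ())`. -/
def toTripleB : Formula → Term × Formula × Unit
  | .just t C => (t, C, ())
  | F => (Term.const 0, F, ())

/-- Helper: map an atom `p_n` to the valuation pair `((), n)`. -/
def toPairV : Formula → Unit × ℕ
  | .atom n => ((), n)
  | _ => ((), 0)

/-- The canonical single-world model over a base `B0` and valuation `val0`. -/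
def canModel (CS : Set Formula) (B0 : Set (Term × Formula)) (val0 : ℕ → Prop) : Model where
  World := Unit
  nonempty := ⟨()⟩
  R _ _ := True
  E t F _ := EvCl CS B0 t F
  val n _ := val0 n

/-- Strong finitary model property of `LP_CS`: for a constant
specification `CS` there are computable functions `f, g, h` such that every formula `A`
not derivable in `LP_CS` fails at some world of a finitary Fitting model for `LP_CS`
whose set of worlds, finite evidence base, and valuation graph are bounded in size by
`f |A|`, `g |A|`, and `h |A|` respectively. -/
theorem strong_finitary_model_property_LP (CS : Set Formula)
    (hCS : ConstSpec AxLP CS) :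
    ∃ f g h : ℕ → ℕ, Computable f ∧ Computable g ∧ Computable h ∧
      ∀ A : Formula, ¬ DerivS AxLP CS A →
        ∃ M : Model, IsModelLP CS M ∧
          Finite M.World ∧ (ValSet M).Finite ∧
          (∃ B : Set (Term × Formula × M.World),
            B.Finite ∧ MinBaseJ4 CS M B ∧ B.ncard ≤ g A.size) ∧
          (∃ w : M.World, ¬ Sat M A w) ∧
          Nat.card M.World ≤ f A.size ∧
          (ValSet M).ncard ≤ h A.size := by
  classical
  refine ⟨fun _ => 1, id, id, Computable.const 1, Computable.id, Computable.id, ?_⟩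
  intro A hA
  -- `{¬A}` is consistent
  have hconA : Con CS {A.neg} := by
    intro hf
    have h1 : Deriv CS ∅ ((A.neg).impl Formula.falsum) := by
      apply deduction
      have : (insert A.neg (∅ : Set Formula)) = {A.neg} := by simp
      rw [this]; exact hf
    have h2 : Deriv CS ∅ A :=
      .mp (.mp (.ax (Ax.dn A ((Formula.atom 0).impl (Formula.atom 0)))) h1) (deriv_id _)
    exact hA (deriv_empty_derivS h2)
  obtain ⟨m, hsubm, hcon, hmax⟩ := lindenbaum hconA
  have hAneg : A.neg ∈ m := hsubm rfl
  set B0 : Set (Term × Formula) :=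
    {p | Formula.just p.1 p.2 ∈ A.subf ∧ Formula.just p.1 p.2 ∈ m} with hB0def
  set M : Model := canModel CS B0 (fun n => Formula.atom n ∈ A.subf ∧ Formula.atom n ∈ m)
    with hMdef
  have hBm : ∀ t C, (t, C) ∈ B0 → Formula.just t C ∈ m := fun t C h => h.2
  have hEm : ∀ t C, EvCl CS B0 t C → Formula.just t C ∈ m :=
    fun t C h => mcs_closed hcon hmax (evcl_deriv hBm h)
  -- truth lemma
  have truth : ∀ C : Formula, C ∈ A.subf → (C ∈ m ↔ Sat M C ()) := by
    intro C
    induction C with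
    | atom n =>
      intro h
      exact ⟨fun hm => ⟨h, hm⟩, fun hv => hv.2⟩
    | neg C ih =>
      intro h
      have hC : C ∈ A.subf := Formula.subf_trans h
        (Finset.mem_insert_of_mem C.mem_subf_self)
      constructor
      · intro hm hs
        exact mcs_not_both hcon ((ih hC).mpr hs) hm
      · intro hs
        exact mcs_neg_complete hcon hmax (fun hmC => hs ((ih hC).mp hmC))
    | impl C D ihC ihD =>
      intro h
      have hC : C ∈ A.subf := Formula.subf_trans h
        (Finset.mem_insert_of_mem (Finset.mem_union_left _ C.mem_subf_self))
      have hD : D ∈ A.subf := Formula.subf_trans h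
        (Finset.mem_insert_of_mem (Finset.mem_union_right _ D.mem_subf_self))
      rw [mcs_impl hcon hmax]
      exact imp_congr (ihC hC) (ihD hD)
    | just t C ih =>
      intro h
      have hC : C ∈ A.subf := Formula.subf_trans h
        (Finset.mem_insert_of_mem C.mem_subf_self)
      constructor
      · intro hm
        refine ⟨EvCl.base ⟨h, hm⟩, fun v _ => ?_⟩
        have hmC : C ∈ m := mcs_closed hcon hmax (.mp (.ax (Ax.jt t C rfl)) (.hyp hm))
        exact (ih hC).mp hmC
      · intro hs
        exact hEm t C hs.1
  refine ⟨M, ?_, ?_, ?_, ?_, ?_, ?_, ?_⟩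
  · -- IsModelLP
    refine ⟨fun w => trivial, fun _ _ _ _ _ => trivial, ?_, ?_, ?_, ?_, ?_⟩
    · rintro s t F w (h | h)
      · exact EvCl.suml h
      · exact EvCl.sumr h
    · intro s t F G w h1 h2; exact EvCl.app h1 h2
    · intro c F w h; exact EvCl.cs h
    · intro t F w h; exact EvCl.bang h
    · intro t F w v h _; exact h
  · exact inferInstanceAs (Finite Unit)
  · -- ValSet finite
    refine Set.Finite.subset ((A.subf.finite_toSet).image
      toPairV) ?_
    rintro ⟨u, n⟩ hp
    exact ⟨Formula.atom n, hp.1, rfl⟩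
  · -- base
    refine ⟨{x | (x.1, x.2.1) ∈ B0}, ?_, ⟨?_, ?_⟩, ?_⟩
    · refine Set.Finite.subset ((A.subf.finite_toSet).image
        toTripleB) ?_
      rintro ⟨t, C, u⟩ hx
      exact ⟨Formula.just t C, hx.1, rfl⟩
    · intro x hx
      exact EvCl.base hx
    · intro E' hadm hsub x hx
      have key : ∀ t C, EvCl CS B0 t C → (t, C, ()) ∈ E' := by
        intro t C h
        induction h with
        | base h => exact hsub h
        | suml h ih => exact hadm.1 _ _ _ () (Or.inl ih)
        | sumr h ih => exact hadm.1 _ _ _ () (Or.inr ih)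
        | app h1 h2 ih1 ih2 => exact hadm.2.1 _ _ _ _ () ih1 ih2
        | cs h => exact hadm.2.2.1 _ _ () h
        | bang h ih => exact hadm.2.2.2.1 _ _ () ih
      exact key x.1 x.2.1 hx
    · calc ({x | (x.1, x.2.1) ∈ B0} : Set (Term × Formula × Unit)).ncard
          ≤ (toTripleB '' ↑A.subf).ncard := by
            refine Set.ncard_le_ncard ?_ ((A.subf.finite_toSet).image _)
            rintro ⟨t, C, u⟩ hx
            exact ⟨Formula.just t C, hx.1, rfl⟩
        _ ≤ (↑A.subf : Set Formula).ncard := Set.ncard_image_le A.subf.finite_toSet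
        _ = A.subf.card := Set.ncard_coe_finset _
        _ ≤ A.size := A.subf_card
  · -- countermodel world
    refine ⟨(), fun hs => ?_⟩
    exact mcs_not_both hcon ((truth A A.mem_subf_self).mpr hs) hAneg
  · show Nat.card Unit ≤ 1
    simp
  · calc (ValSet M).ncard
        ≤ (toPairV ''
            ↑A.subf).ncard := by
          refine Set.ncard_le_ncard ?_ ((A.subf.finite_toSet).image _)
          rintro ⟨u, n⟩ hp
          exact ⟨Formula.atom n, hp.1, rfl⟩
      _ ≤ (↑A.subf : Set Formula).ncard := Set.ncard_image_le A.subf.finite_toSet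
      _ = A.subf.card := Set.ncard_coe_finset _
      _ ≤ A.size := A.subf_card


end JustificationLogic
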